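/- arXiv:2605.12932 — 3 statements merged into one kernel-verified Lean document; each statement's English description precedes it below -/
import Mathlib

section
/- Let f(X) = Σ_{i=1}^M tr((X J_i)^H A_i (X J_i)) and ℋ(X) = Σ_{i=1}^M 2·A_i·X·J_i·J_i^T as in the context. For any X, X̂ ∈ ℂ^{n×k} and any η ∈ ℝ, if Re tr(X̂^H ℋ(X)) ≥ Re tr(X^H ℋ(X)) + η, then f(X̂) ≥ f(X) + η. (The objective of the sum-of-coupled-traces problem satisfies the NPDo Ansatz.) -/
open Matrix
open scoped ComplexOrder

/-- The objective of the sum-of-coupled-traces problem satisfies the NPDo Ansatz: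
if `Re tr(X̂ᴴ ℋ(X)) ≥ Re tr(Xᴴ ℋ(X)) + η` then `f(X̂) ≥ f(X) + η`. -/
theorem stmt_0 (n k M : ℕ) (hk : 1 ≤ k) (hkn : k ≤ n) (hM : 1 ≤ M)
    (A : Fin M → Matrix (Fin n) (Fin n) ℂ) (hA : ∀ i, (A i).PosSemidef)
    (ki : Fin M → ℕ) (c : ∀ i, Fin (ki i) → Fin k) (hc : ∀ i, Function.Injective (c i))
    (J : ∀ i, Matrix (Fin k) (Fin (ki i)) ℂ)
    (hJ : ∀ i, J i = Matrix.of fun a b => if a = c i b then 1 else 0)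
    (f : Matrix (Fin n) (Fin k) ℂ → ℝ)
    (hf : ∀ X, f X = ∑ i, (Matrix.trace ((X * J i)ᴴ * A i * (X * J i))).re)
    (H : Matrix (Fin n) (Fin k) ℂ → Matrix (Fin n) (Fin k) ℂ)
    (hH : ∀ X, H X = ∑ i, (2 : ℂ) • (A i * X * J i * (J i)ᵀ))
    (X Xhat : Matrix (Fin n) (Fin k) ℂ) (η : ℝ)
    (hineq : (Matrix.trace (Xᴴ * H X)).re + η ≤ (Matrix.trace (Xhatᴴ * H X)).re) :
    f X + η ≤ f Xhat := by
  -- J i has real entries, so Jᴴ = Jᵀ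
  have hJH : ∀ i, (J i)ᴴ = (J i)ᵀ := by
    intro i
    ext a b
    simp [hJ i, conjTranspose_apply, transpose_apply, apply_ite (starRingEnd ℂ)]
  -- key: trace (Yᴴ * H X) = 2 * ∑ trace ((Y*J i)ᴴ * A i * (X*J i))
  have key : ∀ Y : Matrix (Fin n) (Fin k) ℂ,
      Matrix.trace (Yᴴ * H X) = 2 * ∑ i, Matrix.trace ((Y * J i)ᴴ * A i * (X * J i)) := by
    intro Y
    rw [hH, Matrix.mul_sum, Matrix.trace_sum, Finset.mul_sum]
    congr 1
    ext i
    rw [Matrix.mul_smul, Matrix.trace_smul]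
    have : Matrix.trace (Yᴴ * (A i * X * J i * (J i)ᵀ))
        = Matrix.trace ((Y * J i)ᴴ * A i * (X * J i)) := by
      rw [Matrix.conjTranspose_mul, hJH i]
      calc Matrix.trace (Yᴴ * (A i * X * J i * (J i)ᵀ))
          = Matrix.trace ((Yᴴ * (A i * X * J i)) * (J i)ᵀ) := by
            simp only [Matrix.mul_assoc]
        _ = Matrix.trace ((J i)ᵀ * (Yᴴ * (A i * X * J i))) := by
            rw [Matrix.trace_mul_comm]
        _ = Matrix.trace ((J i)ᵀ * Yᴴ * A i * (X * J i)) := by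
            simp only [Matrix.mul_assoc]
    rw [this]
    simp
  -- each PSD difference term is nonneg
  have hpsd : ∀ i : Fin M,
      0 ≤ (Matrix.trace (((Xhat - X) * J i)ᴴ * A i * ((Xhat - X) * J i))).re := by
    intro i
    have h := (hA i).conjTranspose_mul_mul_same ((Xhat - X) * J i)
    set Mi := ((Xhat - X) * J i)ᴴ * A i * ((Xhat - X) * J i) with hMi
    have hd : ∀ j, 0 ≤ (Mi j j).re := by
      intro j
      have := h.dotProduct_mulVec_nonneg (Pi.single j 1)
      simpa [dotProduct, Matrix.mulVec, Pi.single_apply, Finset.sum_ite_eq,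
        Complex.le_def] using this.1
    have : Matrix.trace Mi = ∑ j, Mi j j := rfl
    rw [this, Complex.re_sum]
    exact Finset.sum_nonneg fun j _ => hd j
  -- cross-term symmetry: Re tr(Yᴴ A Z) = Re tr(Zᴴ A Y)
  have hsym : ∀ (i : Fin M) (Y Z : Matrix (Fin n) (Fin (ki i)) ℂ),
      (Matrix.trace (Yᴴ * A i * Z)).re = (Matrix.trace (Zᴴ * A i * Y)).re := by
    intro i Y Z
    have : (Yᴴ * A i * Z)ᴴ = Zᴴ * A i * Y := by
      simp [Matrix.conjTranspose_mul, (hA i).isHermitian.eq, Matrix.mul_assoc]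
    rw [← this, Matrix.trace_conjTranspose]
    simp
  -- expand the PSD terms
  have expand : ∀ i : Fin M,
      (Matrix.trace (((Xhat - X) * J i)ᴴ * A i * ((Xhat - X) * J i))).re
      = (Matrix.trace ((Xhat * J i)ᴴ * A i * (Xhat * J i))).re
        - 2 * (Matrix.trace ((Xhat * J i)ᴴ * A i * (X * J i))).re
        + (Matrix.trace ((X * J i)ᴴ * A i * (X * J i))).re := by
    intro i
    have e1 : (Xhat - X) * J i = Xhat * J i - X * J i := by rw [Matrix.sub_mul]
    rw [e1, Matrix.conjTranspose_sub, Matrix.sub_mul, Matrix.sub_mul,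
      Matrix.mul_sub, Matrix.mul_sub, Matrix.trace_sub, Matrix.trace_sub,
      Matrix.trace_sub]
    have := hsym i (X * J i) (Xhat * J i)
    simp only [Complex.sub_re]
    linarith
  -- put everything together
  have hsum : 0 ≤ f Xhat - 2 * ∑ i, (Matrix.trace ((Xhat * J i)ᴴ * A i * (X * J i))).re
      + f X := by
    have := Finset.sum_nonneg (fun i (_ : i ∈ Finset.univ) => hpsd i)
    rw [Finset.sum_congr rfl (fun i _ => expand i)] at this
    rw [Finset.sum_add_distrib, Finset.sum_sub_distrib, ← Finset.mul_sum] at this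
    rw [hf Xhat, hf X]
    linarith
  have hXhat : (Matrix.trace (Xhatᴴ * H X)).re
      = 2 * ∑ i, (Matrix.trace ((Xhat * J i)ᴴ * A i * (X * J i))).re := by
    rw [key Xhat]
    push_cast [Complex.mul_re]
    simp [Complex.re_sum]
  have hX : (Matrix.trace (Xᴴ * H X)).re = 2 * f X := by
    rw [key X, hf X]
    push_cast [Complex.mul_re]
    simp [Complex.re_sum]
  rw [hXhat, hX] at hineq
  linarith
end

section
/- Let n ≥ k ≥ 1, let H ∈ ℂ^{n×k}, and let X ∈ ℂ^{n×k} be orthonormal (X^H X = I_k). Then Re tr(X^H H) ≤ ‖H‖_tr, and equality holds if and only if H = X·(X^H H) and X^H H is Hermitian positive semidefinite (i.e., H = X·(X^H H) is a polar decomposition of H with orthonormal polar factor X). -/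
open Matrix
open scoped ComplexOrder

/-- The trace norm (nuclear norm) of a complex matrix: the sum of all its singular values,
computed as the sum of the square roots of the eigenvalues of `Hᴴ * H`. -/
noncomputable def traceNorm {α β : Type*} [Fintype α] [Fintype β] [DecidableEq β]
    (H : Matrix α β ℂ) : ℝ :=
  ∑ i, Real.sqrt ((Matrix.posSemidef_conjTranspose_mul_self H).1.eigenvalues i)

section SqrtHelpers
open scoped MatrixOrder

/-- The positive semidefinite square root (old Mathlib definition). -/
noncomputable def Matrix.PosSemidef.sqrt {m : Type*} [Fintype m] [DecidableEq m]
    {A : Matrix m m ℂ} (hA : A.PosSemidef) : Matrix m m ℂ :=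
  (hA.1.eigenvectorUnitary : Matrix m m ℂ) *
    Matrix.diagonal (fun i => (Real.sqrt (hA.1.eigenvalues i) : ℂ)) *
    (star hA.1.eigenvectorUnitary : Matrix m m ℂ)

lemma Matrix.PosSemidef.sqrt_eq_cfc' {m : Type*} [Fintype m] [DecidableEq m]
    {A : Matrix m m ℂ} (hA : A.PosSemidef) : hA.sqrt = CFC.sqrt A := by
  rw [CFC.sqrt_eq_cfc, cfc_nnreal_eq_real _ A hA.nonneg, hA.1.cfc_eq]
  simp only [IsHermitian.cfc, Unitary.conjStarAlgAut_apply, Matrix.PosSemidef.sqrt]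
  congr 3
  funext i
  simp [Real.coe_sqrt, Real.coe_toNNReal', max_eq_left (hA.eigenvalues_nonneg i)]

lemma Matrix.PosSemidef.posSemidef_sqrt {m : Type*} [Fintype m] [DecidableEq m]
    {A : Matrix m m ℂ} (hA : A.PosSemidef) : hA.sqrt.PosSemidef := by
  rw [hA.sqrt_eq_cfc']
  exact (CFC.sqrt_nonneg A).posSemidef

lemma Matrix.PosSemidef.eq_sqrt_of_sq_eq {m : Type*} [Fintype m] [DecidableEq m]
    {A : Matrix m m ℂ} (hA : A.PosSemidef) {B : Matrix m m ℂ} (hB : B.PosSemidef)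
    (hAB : A ^ 2 = B) : A = hB.sqrt := by
  rw [hB.sqrt_eq_cfc', ← hAB, CFC.sqrt_sq A hA.nonneg]

end SqrtHelpers

/-- The `i`-th column of a matrix, as an element of Euclidean space. -/
def col' {n k : ℕ} (B : Matrix (Fin n) (Fin k) ℂ) (i : Fin k) : EuclideanSpace ℂ (Fin n) :=
  WithLp.toLp 2 (fun a => B a i)

/-- Inner product of the `i`-th columns of two matrices, as an entry of `Bᴴ * C`. -/
lemma inner_col {n k : ℕ} (B C : Matrix (Fin n) (Fin k) ℂ) (i : Fin k) :
    (inner ℂ (col' B i) (col' C i) : ℂ) = (Bᴴ * C) i i := by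
  simp only [col', PiLp.inner_apply, PiLp.toLp_apply, RCLike.inner_apply, Matrix.mul_apply,
    Matrix.conjTranspose_apply]
  exact Finset.sum_congr rfl fun j _ => mul_comm _ _

/-- The trace of the positive semidefinite square root of `Hᴴ * H` is the trace norm of `H`. -/
lemma trace_sqrt_eq {n k : ℕ} (H : Matrix (Fin n) (Fin k) ℂ) :
    Matrix.trace (Matrix.posSemidef_conjTranspose_mul_self H).sqrt = (traceNorm H : ℂ) := by
  rw [Matrix.PosSemidef.sqrt, Matrix.trace_mul_cycle]
  rw [show ((star (Matrix.posSemidef_conjTranspose_mul_self H).1.eigenvectorUnitary :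
        Matrix (Fin k) (Fin k) ℂ) *
      (Matrix.posSemidef_conjTranspose_mul_self H).1.eigenvectorUnitary.1 = 1) from
    Unitary.coe_star_mul_self _]
  rw [Matrix.one_mul, Matrix.trace_diagonal, traceNorm]
  push_cast
  rfl

/-- for orthonormal `X` (i.e. `Xᴴ X = I`), `Re tr(Xᴴ H) ≤ ‖H‖_tr`, with equality
iff `H = X (Xᴴ H)` and `Xᴴ H` is Hermitian positive semidefinite (a polar decomposition). -/
theorem stmt_2 (n k : ℕ) (hk : 1 ≤ k) (hkn : k ≤ n)
    (H : Matrix (Fin n) (Fin k) ℂ) (X : Matrix (Fin n) (Fin k) ℂ) (hX : Xᴴ * X = 1) :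
    (Matrix.trace (Xᴴ * H)).re ≤ traceNorm H ∧
      ((Matrix.trace (Xᴴ * H)).re = traceNorm H ↔
        H = X * (Xᴴ * H) ∧ (Xᴴ * H).PosSemidef) := by
  classical
  have hA : (Hᴴ * H).PosSemidef := Matrix.posSemidef_conjTranspose_mul_self H
  -- notation
  let d : Fin k → ℝ := hA.1.eigenvalues
  let V : Matrix (Fin k) (Fin k) ℂ := hA.1.eigenvectorUnitary
  have hVsV : Vᴴ * V = 1 := by
    rw [← Matrix.star_eq_conjTranspose]
    exact Unitary.coe_star_mul_self hA.1.eigenvectorUnitary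
  have hVVs : V * Vᴴ = 1 := by
    rw [← Matrix.star_eq_conjTranspose]
    exact Unitary.coe_mul_star_self hA.1.eigenvectorUnitary
  have hdiag : Vᴴ * (Hᴴ * H) * V = Matrix.diagonal (RCLike.ofReal ∘ d) := by
    rw [← Matrix.star_eq_conjTranspose]
    have hc := hA.1.conjStarAlgAut_star_eigenvectorUnitary
    rw [Unitary.conjStarAlgAut_star_apply] at hc
    exact hc
  -- the columns
  have h1 : (X * V)ᴴ * (X * V) = Vᴴ * V := by
    have h : Xᴴ * (X * V) = V := by rw [← Matrix.mul_assoc, hX, Matrix.one_mul]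
    rw [Matrix.conjTranspose_mul, Matrix.mul_assoc, h]
  have h2 : (H * V)ᴴ * (H * V) = Matrix.diagonal (RCLike.ofReal ∘ d) := by
    rw [Matrix.conjTranspose_mul, ← hdiag]
    simp only [Matrix.mul_assoc]
  have hxn : ∀ i : Fin k, ‖col' (X * V) i‖ = 1 := by
    intro i
    have h3 : (inner ℂ (col' (X * V) i) (col' (X * V) i) : ℂ) = 1 := by
      rw [inner_col, h1, hVsV, Matrix.one_apply_eq]
    rw [inner_self_eq_norm_sq_to_K] at h3
    have h5 : ‖col' (X * V) i‖ ^ 2 = 1 := by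
      have h4 := congrArg Complex.re h3
      simpa [← Complex.ofReal_pow] using h4
    nlinarith [norm_nonneg (col' (X * V) i)]
  have hyn : ∀ i : Fin k, ‖col' (H * V) i‖ = Real.sqrt (d i) := by
    intro i
    have h3 : (inner ℂ (col' (H * V) i) (col' (H * V) i) : ℂ) = (d i : ℂ) := by
      rw [inner_col, h2, Matrix.diagonal_apply_eq]
      rfl
    rw [inner_self_eq_norm_sq_to_K] at h3
    have h5 : ‖col' (H * V) i‖ ^ 2 = d i := by
      have h4 := congrArg Complex.re h3
      simpa [← Complex.ofReal_pow] using h4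
    rw [← h5, Real.sqrt_sq (norm_nonneg _)]
  -- trace identity
  have htr1 : (X * V)ᴴ * (H * V) = Vᴴ * ((Xᴴ * H) * V) := by
    rw [Matrix.conjTranspose_mul]
    simp only [Matrix.mul_assoc]
  have htr : Matrix.trace (Xᴴ * H)
      = ∑ i, (inner ℂ (col' (X * V) i) (col' (H * V) i) : ℂ) := by
    calc Matrix.trace (Xᴴ * H) = Matrix.trace ((Xᴴ * H) * (V * Vᴴ)) := by
            rw [hVVs, Matrix.mul_one]
      _ = Matrix.trace ((X * V)ᴴ * (H * V)) := by
            rw [htr1, ← Matrix.mul_assoc, Matrix.trace_mul_comm]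
      _ = ∑ i, ((X * V)ᴴ * (H * V)) i i := by rw [Matrix.trace]; rfl
      _ = _ := by simp_rw [inner_col]
  have hre : (Matrix.trace (Xᴴ * H)).re
      = ∑ i, (inner ℂ (col' (X * V) i) (col' (H * V) i) : ℂ).re := by
    rw [htr, Complex.re_sum]
  have hTN : traceNorm H = ∑ i, Real.sqrt (d i) := rfl
  have hle : ∀ i : Fin k,
      (inner ℂ (col' (X * V) i) (col' (H * V) i) : ℂ).re ≤ Real.sqrt (d i) := by
    intro i
    calc (inner ℂ (col' (X * V) i) (col' (H * V) i) : ℂ).re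
        ≤ ‖(inner ℂ (col' (X * V) i) (col' (H * V) i) : ℂ)‖ := Complex.re_le_norm _
      _ ≤ ‖col' (X * V) i‖ * ‖col' (H * V) i‖ := norm_inner_le_norm _ _
      _ = Real.sqrt (d i) := by rw [hxn i, hyn i, one_mul]
  have hmain : (Matrix.trace (Xᴴ * H)).re ≤ traceNorm H := by
    rw [hre, hTN]
    exact Finset.sum_le_sum fun i _ => hle i
  refine ⟨hmain, ?_, ?_⟩
  · -- equality implies polar decomposition
    intro hEq
    have heach : ∀ i ∈ Finset.univ,
        (inner ℂ (col' (X * V) i) (col' (H * V) i) : ℂ).re = Real.sqrt (d i) := by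
      apply (Finset.sum_eq_sum_iff_of_le fun i _ => hle i).mp
      rw [← hre, hEq, hTN]
    have hcol : ∀ i : Fin k,
        col' (H * V) i = (Real.sqrt (d i) : ℂ) • col' (X * V) i := by
      intro i
      set xv : EuclideanSpace ℂ (Fin n) := col' (X * V) i with hxv
      set yv : EuclideanSpace ℂ (Fin n) := col' (H * V) i with hyv
      have hrei : (inner ℂ xv yv : ℂ).re = Real.sqrt (d i) := heach i (Finset.mem_univ i)
      have habs : ‖(inner ℂ xv yv : ℂ)‖ ≤ Real.sqrt (d i) := by
        calc ‖(inner ℂ xv yv : ℂ)‖ ≤ ‖xv‖ * ‖yv‖ := norm_inner_le_norm _ _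
          _ = Real.sqrt (d i) := by rw [hxn i, hyn i, one_mul]
      have him : (inner ℂ xv yv : ℂ) = (Real.sqrt (d i) : ℂ) := by
        have hsq : (inner ℂ xv yv : ℂ).re ^ 2 + (inner ℂ xv yv : ℂ).im ^ 2
            = ‖(inner ℂ xv yv : ℂ)‖ ^ 2 := by
          rw [Complex.sq_norm, Complex.normSq_apply]; ring
        have him0 : (inner ℂ xv yv : ℂ).im = 0 := by
          nlinarith [norm_nonneg (inner ℂ xv yv : ℂ), Real.sqrt_nonneg (d i),
            sq_nonneg ((inner ℂ xv yv : ℂ).im)]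
        apply Complex.ext
        · simpa using hrei
        · simpa using him0
      have hinner_eq : (inner ℂ xv yv : ℂ) = (‖xv‖ : ℂ) * (‖yv‖ : ℂ) := by
        rw [hxn i, hyn i, him]
        simp
      have h7 := inner_eq_norm_mul_iff.mp hinner_eq
      rw [hxn i, hyn i] at h7
      simpa using h7.symm
    -- H * V = (X * V) * diagonal (sqrt d)
    have hHV : H * V = (X * V) * Matrix.diagonal (fun i => (Real.sqrt (d i) : ℂ)) := by
      ext a i
      have h8 := congrArg (fun v => v a) (hcol i)
      simp only [col', PiLp.smul_apply, PiLp.toLp_apply, smul_eq_mul] at h8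
      rw [Matrix.mul_diagonal, h8]
      ring
    have hsqrt : hA.sqrt = V * Matrix.diagonal (fun i => (Real.sqrt (d i) : ℂ)) * Vᴴ := rfl
    have hH : H = X * hA.sqrt := by
      calc H = H * (V * Vᴴ) := by rw [hVVs, Matrix.mul_one]
        _ = (H * V) * Vᴴ := by rw [Matrix.mul_assoc]
        _ = (X * V) * Matrix.diagonal (fun i => (Real.sqrt (d i) : ℂ)) * Vᴴ := by rw [hHV]
        _ = X * hA.sqrt := by rw [hsqrt]; simp only [Matrix.mul_assoc]
    have hXH : Xᴴ * H = hA.sqrt := by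
      conv_lhs => rw [hH]
      rw [← Matrix.mul_assoc, hX, Matrix.one_mul]
    constructor
    · rw [hXH, ← hH]
    · rw [hXH]; exact hA.posSemidef_sqrt
  · -- polar decomposition implies equality
    rintro ⟨hpolar, hpsd⟩
    have hM2 : (Xᴴ * H) ^ 2 = Hᴴ * H := by
      conv_rhs => rw [hpolar]
      rw [Matrix.conjTranspose_mul, Matrix.mul_assoc, ← Matrix.mul_assoc Xᴴ X, hX,
        Matrix.one_mul, hpsd.1, pow_two]
    have hMeq : Xᴴ * H = hA.sqrt := hpsd.eq_sqrt_of_sq_eq hA hM2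
    rw [hMeq, trace_sqrt_eq]
    simp
end

section
/- Let f and the matrices H_{ℓs}(P_1,…,P_m) be as defined in the context. Then for every mode 1 ≤ ℓ ≤ m and all matrices P_i ∈ ℂ^{n_i×k_i}: (i) each H_{ℓs}(P_1,…,P_m) is Hermitian positive semidefinite, and (ii) f(P_1, …, P_m) = Σ_{s=1}^t tr(P_{ℓs}^H · H_{ℓs}(P_1,…,P_m) · P_{ℓs}). -/
open Matrix Filter Topology
open scoped ComplexOrder Classical

/-- The entries of the multi-mode product `B ×₁ P₁ᴴ ×₂ ⋯ ×ₘ Pₘᴴ` of an `m`-mode tensor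
`B` of size `n 0 × ⋯ × n (m-1)` with the conjugate transposes of the matrices `P ℓ`.
The column index set of `P ℓ` is `(s : Fin t) × Fin (κ ℓ s)`, encoding the partition of
`k ℓ = Σ s, κ ℓ s` into `t` blocks (block `s` has the indices with first component `s`). -/
noncomputable def multiProd {m t : ℕ} {n : Fin m → ℕ} {κ : Fin m → Fin t → ℕ}
    (B : (∀ ℓ, Fin (n ℓ)) → ℂ)
    (P : ∀ ℓ, Matrix (Fin (n ℓ)) ((s : Fin t) × Fin (κ ℓ s)) ℂ) :
    (∀ ℓ, (s : Fin t) × Fin (κ ℓ s)) → ℂ :=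
  fun i => ∑ j : ∀ ℓ, Fin (n ℓ), (∏ ℓ, star (P ℓ (j ℓ) (i ℓ))) * B j

/-- The block-diagonal objective
`f(P₁,…,Pₘ) = ‖BDiag(B ×₁ P₁ᴴ ×₂ ⋯ ×ₘ Pₘᴴ)‖_F²`: the sum of `|T(i)|²` over all
multi-indices `i` whose components all lie in the same diagonal block. -/
noncomputable def fObj {m t : ℕ} {n : Fin m → ℕ} {κ : Fin m → Fin t → ℕ}
    (B : (∀ ℓ, Fin (n ℓ)) → ℂ)
    (P : ∀ ℓ, Matrix (Fin (n ℓ)) ((s : Fin t) × Fin (κ ℓ s)) ℂ) : ℝ :=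
  ∑ i : ∀ ℓ, (s : Fin t) × Fin (κ ℓ s),
    if ∃ s : Fin t, ∀ ℓ, (i ℓ).1 = s then Complex.normSq (multiProd B P i) else 0

/-- The tensor `B_{ℓ,s} = B ×₁ P_{1s}ᴴ ⋯ ×_{ℓ-1} P_{ℓ-1,s}ᴴ ×_{ℓ+1} P_{ℓ+1,s}ᴴ ⋯ ×ₘ P_{ms}ᴴ`
(mode products by the `s`-th column blocks over every mode except `ℓ`), evaluated at the index
whose `ℓ`-th component is `a` and whose other components are given by `ih`. -/
noncomputable def Bls {m t : ℕ} {n : Fin m → ℕ} {κ : Fin m → Fin t → ℕ}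
    (B : (∀ ℓ, Fin (n ℓ)) → ℂ)
    (P : ∀ ℓ, Matrix (Fin (n ℓ)) ((s : Fin t) × Fin (κ ℓ s)) ℂ)
    (ℓ : Fin m) (s : Fin t) (a : Fin (n ℓ))
    (ih : ∀ r : {r : Fin m // r ≠ ℓ}, Fin (κ r.1 s)) : ℂ :=
  ∑ j : ∀ r, Fin (n r),
    if j ℓ = a then (∏ r : {r : Fin m // r ≠ ℓ}, star (P r.1 (j r.1) ⟨s, ih r⟩)) * B j else 0

/-- The matrix `H_{ℓs}(P₁,…,Pₘ) ∈ ℂ^{n_ℓ×n_ℓ}` with `(a,b)`-entry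
`Σ_î B_{ℓ,s}(î[ℓ↦a])·conj(B_{ℓ,s}(î[ℓ↦b]))`, summed over multi-indices `î` with the
`ℓ`-th coordinate ignored. -/
noncomputable def Hmat {m t : ℕ} {n : Fin m → ℕ} {κ : Fin m → Fin t → ℕ}
    (B : (∀ ℓ, Fin (n ℓ)) → ℂ)
    (P : ∀ ℓ, Matrix (Fin (n ℓ)) ((s : Fin t) × Fin (κ ℓ s)) ℂ)
    (ℓ : Fin m) (s : Fin t) : Matrix (Fin (n ℓ)) (Fin (n ℓ)) ℂ :=
  Matrix.of fun a b =>
    ∑ ih : ∀ r : {r : Fin m // r ≠ ℓ}, Fin (κ r.1 s),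
      Bls B P ℓ s a ih * star (Bls B P ℓ s b ih)

/-- The partial Euclidean gradient `ℋ_ℓ(P₁,…,Pₘ) ∈ ℂ^{n_ℓ×k_ℓ}` of `fObj` with respect to
`P ℓ` (for the real inner product `⟨X,Y⟩ = Re tr(Yᴴ X)`): its `s`-th column block is
`2 · H_{ℓs}(P₁,…,Pₘ) · P_{ℓs}`. -/
noncomputable def scrH {m t : ℕ} {n : Fin m → ℕ} {κ : Fin m → Fin t → ℕ}
    (B : (∀ ℓ, Fin (n ℓ)) → ℂ)
    (P : ∀ ℓ, Matrix (Fin (n ℓ)) ((s : Fin t) × Fin (κ ℓ s)) ℂ)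
    (ℓ : Fin m) : Matrix (Fin (n ℓ)) ((s : Fin t) × Fin (κ ℓ s)) ℂ :=
  Matrix.of fun a sc => 2 * ∑ b, Hmat B P ℓ sc.1 a b * P ℓ b sc

section helpers

variable {m t : ℕ} {n : Fin m → ℕ} {κ : Fin m → Fin t → ℕ}
  (B : (∀ ℓ, Fin (n ℓ)) → ℂ)
  (P : ∀ ℓ, Matrix (Fin (n ℓ)) ((s : Fin t) × Fin (κ ℓ s)) ℂ)

lemma hmat_eq (ℓ : Fin m) (s : Fin t) :
    Hmat B P ℓ s = (Matrix.of fun (a : Fin (n ℓ))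
        (ih : ∀ r : {r : Fin m // r ≠ ℓ}, Fin (κ r.1 s)) => Bls B P ℓ s a ih) *
      (Matrix.of fun (a : Fin (n ℓ))
        (ih : ∀ r : {r : Fin m // r ≠ ℓ}, Fin (κ r.1 s)) => Bls B P ℓ s a ih)ᴴ := by
  ext a b
  simp [Hmat, Matrix.mul_apply, Matrix.conjTranspose_apply]

lemma hmat_psd (ℓ : Fin m) (s : Fin t) : (Hmat B P ℓ s).PosSemidef := by
  rw [hmat_eq]
  exact Matrix.posSemidef_self_mul_conjTranspose _

/-- inner product of the `s,c` column of `P ℓ` with the slices `Bls`. -/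
noncomputable def Wfun (ℓ : Fin m) (s : Fin t) (c : Fin (κ ℓ s))
    (ih : ∀ r : {r : Fin m // r ≠ ℓ}, Fin (κ r.1 s)) : ℂ :=
  ∑ a, star (P ℓ a ⟨s, c⟩) * Bls B P ℓ s a ih

lemma multiProd_diag (ℓ : Fin m) (s : Fin t) (g : ∀ r, Fin (κ r s)) :
    multiProd B P (fun r => ⟨s, g r⟩) = Wfun B P ℓ s (g ℓ) (fun r => g r.1) := by
  unfold multiProd Wfun Bls
  calc ∑ j : ∀ r, Fin (n r), (∏ r, star (P r (j r) ⟨s, g r⟩)) * B j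
      = ∑ j : ∀ r, Fin (n r), star (P ℓ (j ℓ) ⟨s, g ℓ⟩) *
          ((∏ r : {r : Fin m // r ≠ ℓ}, star (P r.1 (j r.1) ⟨s, g r.1⟩)) * B j) := by
        refine Finset.sum_congr rfl fun j _ => ?_
        rw [Fintype.prod_eq_mul_prod_compl ℓ, mul_assoc]
        congr 2
        exact (Finset.prod_subtype _ (fun x => by simp) _)
    _ = ∑ a : Fin (n ℓ), ∑ j : ∀ r, Fin (n r),
          if j ℓ = a then star (P ℓ a ⟨s, g ℓ⟩) *
            ((∏ r : {r : Fin m // r ≠ ℓ}, star (P r.1 (j r.1) ⟨s, g r.1⟩)) * B j) else 0 := by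
        rw [Finset.sum_comm]
        refine Finset.sum_congr rfl fun j _ => ?_
        simp
    _ = ∑ a : Fin (n ℓ), star (P ℓ a ⟨s, g ℓ⟩) * ∑ j : ∀ r, Fin (n r),
          if j ℓ = a then
            (∏ r : {r : Fin m // r ≠ ℓ}, star (P r.1 (j r.1) ⟨s, g r.1⟩)) * B j else 0 := by
        refine Finset.sum_congr rfl fun a _ => ?_
        rw [Finset.mul_sum]
        exact Finset.sum_congr rfl fun j _ => by rw [mul_ite, mul_zero]

lemma trace_re (ℓ : Fin m) (s : Fin t) :
    (Matrix.trace ((Matrix.of fun a (c : Fin (κ ℓ s)) => P ℓ a ⟨s, c⟩)ᴴ * Hmat B P ℓ s *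
        (Matrix.of fun a (c : Fin (κ ℓ s)) => P ℓ a ⟨s, c⟩))).re =
    ∑ c : Fin (κ ℓ s), ∑ ih : ∀ r : {r : Fin m // r ≠ ℓ}, Fin (κ r.1 s),
      Complex.normSq (Wfun B P ℓ s c ih) := by
  set Q : Matrix (Fin (n ℓ)) (Fin (κ ℓ s)) ℂ :=
    Matrix.of fun a (c : Fin (κ ℓ s)) => P ℓ a ⟨s, c⟩ with hQ
  set M : Matrix (Fin (n ℓ)) (∀ r : {r : Fin m // r ≠ ℓ}, Fin (κ r.1 s)) ℂ :=
    Matrix.of fun a ih => Bls B P ℓ s a ih with hM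
  have h1 : Qᴴ * Hmat B P ℓ s * Q = (Mᴴ * Q)ᴴ * (Mᴴ * Q) := by
    rw [hmat_eq B P ℓ s, Matrix.conjTranspose_mul, Matrix.conjTranspose_conjTranspose]
    simp only [Matrix.mul_assoc]
    rfl
  have hN : ∀ ih c, (Mᴴ * Q) ih c = star (Wfun B P ℓ s c ih) := by
    intro ih c
    simp only [Matrix.mul_apply, Matrix.conjTranspose_apply, Wfun, Matrix.of_apply,
      star_sum, star_mul', star_star]
    exact Finset.sum_congr rfl fun x _ => mul_comm _ _
  have h2 : Matrix.trace (Qᴴ * Hmat B P ℓ s * Q) =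
      ∑ c : Fin (κ ℓ s), ∑ ih : ∀ r : {r : Fin m // r ≠ ℓ}, Fin (κ r.1 s),
        ((Complex.normSq (Wfun B P ℓ s c ih) : ℂ)) := by
    rw [h1, Matrix.trace]
    refine Finset.sum_congr rfl fun c _ => ?_
    rw [Matrix.diag_apply, Matrix.mul_apply]
    refine Finset.sum_congr rfl fun ih _ => ?_
    rw [Matrix.conjTranspose_apply, hN, star_star]
    simp [Complex.star_def, Complex.mul_conj]
  rw [h2]
  simp

lemma fObj_eq (hκ : ∀ ℓ s, 1 ≤ κ ℓ s) (ℓ : Fin m) :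
    fObj B P = ∑ p : (s : Fin t) × (∀ r, Fin (κ r s)),
      Complex.normSq (multiProd B P (fun r => ⟨p.1, p.2 r⟩)) := by
  have cast_eq : ∀ (r : Fin m) (u v : Fin t) (h : u = v) (x : Fin (κ r u)),
      (⟨v, Fin.cast (congrArg (κ r) h) x⟩ : (s : Fin t) × Fin (κ r s)) = ⟨u, x⟩ := by
    intro r u v h x; subst h; rfl
  rw [fObj, ← Finset.sum_filter]
  refine Finset.sum_nbij'
    (i := fun i => (⟨(i ℓ).1, fun r => if h : (i r).1 = (i ℓ).1
      then Fin.cast (congrArg (κ r) h) (i r).2 else ⟨0, hκ r (i ℓ).1⟩⟩ :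
        (s : Fin t) × (∀ r, Fin (κ r s))))
    (j := fun p => fun r => ⟨p.1, p.2 r⟩) ?_ ?_ ?_ ?_ ?_
  · intro i _; exact Finset.mem_univ _
  · intro p _
    simp only [Finset.mem_filter, Finset.mem_univ, true_and]
    exact ⟨p.1, fun r => rfl⟩
  · intro i hi
    obtain ⟨s₀, hs₀⟩ := (Finset.mem_filter.mp hi).2
    funext r
    have h : (i r).1 = (i ℓ).1 := by rw [hs₀ r, hs₀ ℓ]
    simp only [dif_pos h]
    exact cast_eq r _ _ h _
  · intro p _
    obtain ⟨s, g⟩ := p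
    dsimp only
    congr 1
    funext r
    simp
  · intro i hi
    obtain ⟨s₀, hs₀⟩ := (Finset.mem_filter.mp hi).2
    have key : (fun r => (⟨(i ℓ).1, if h : (i r).1 = (i ℓ).1
        then Fin.cast (congrArg (κ r) h) (i r).2 else ⟨0, hκ r (i ℓ).1⟩⟩ :
          (s : Fin t) × Fin (κ r s))) = i := by
      funext r
      have h : (i r).1 = (i ℓ).1 := by rw [hs₀ r, hs₀ ℓ]
      simp only [dif_pos h]
      exact cast_eq r _ _ h _
    rw [key]

end helpers

/-- each `H_{ℓs}` is Hermitian positive semidefinite, and the block-diagonal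
objective can be written as `f(P₁,…,Pₘ) = Σ_s tr(P_{ℓs}ᴴ H_{ℓs} P_{ℓs})` for every mode `ℓ`. -/
theorem stmt_6 (m t : ℕ) (hm : 1 ≤ m) (ht : 1 ≤ t)
    (n : Fin m → ℕ) (hn : ∀ ℓ, 1 ≤ n ℓ)
    (κ : Fin m → Fin t → ℕ) (hκ : ∀ ℓ s, 1 ≤ κ ℓ s)
    (hkn : ∀ ℓ, (∑ s, κ ℓ s) ≤ n ℓ)
    (B : (∀ ℓ, Fin (n ℓ)) → ℂ)
    (P : ∀ ℓ, Matrix (Fin (n ℓ)) ((s : Fin t) × Fin (κ ℓ s)) ℂ) :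
    ∀ ℓ : Fin m,
      (∀ s : Fin t, (Hmat B P ℓ s).PosSemidef) ∧
      fObj B P = ∑ s : Fin t,
        (Matrix.trace
          ((Matrix.of fun a (c : Fin (κ ℓ s)) => P ℓ a ⟨s, c⟩)ᴴ * Hmat B P ℓ s *
            (Matrix.of fun a (c : Fin (κ ℓ s)) => P ℓ a ⟨s, c⟩))).re := by
  intro ℓ
  refine ⟨fun s => hmat_psd B P ℓ s, ?_⟩
  rw [fObj_eq B P hκ ℓ, ← Finset.univ_sigma_univ, Finset.sum_sigma]
  refine Finset.sum_congr rfl fun s _ => ?_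
  rw [trace_re B P ℓ s]
  refine Eq.trans (Fintype.sum_equiv (Equiv.piSplitAt ℓ fun r => Fin (κ r s)) _
    (fun p => Complex.normSq (Wfun B P ℓ s p.1 p.2)) fun g => ?_) (Fintype.sum_prod_type _)
  rw [multiProd_diag B P ℓ s g]
  rfl
end
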